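/- If ‖R^∨_{A_n}‖_∞ → 0 and ‖R_{A_n}‖₁ = O(1) as n → ∞, then the sequence R_{A_n} belongs to the class 𝓜ᵐ; that is, the solutions Z_n of the Cauchy problems Z_n' + R_{A_n} Z_n = 0, Z_n(a) = I_m converge to the identity matrix uniformly on [a,b]. -/

import Mathlib

open MeasureTheory Filter Topology Set

attribute [local instance] Matrix.normedAddCommGroup Matrix.normedSpace

/-- The `ContinuousENorm` structure coming from the local normed group structure on matrices
(added in the port: the newer Mathlib no longer finds it from `Matrix.normedAddCommGroup`). -/
noncomputable def matrixContinuousENorm (ι : Type*) [Fintype ι] :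
    ContinuousENorm (Matrix ι ι ℂ) :=
  SeminormedAddGroup.toContinuousENorm

attribute [local instance] matrixContinuousENorm

/-- The sup-norm of a function over the interval `[a, b]`. -/
noncomputable def supIcc {E : Type*} [NormedAddCommGroup E] (a b : ℝ) (g : ℝ → E) : ℝ :=
  ⨆ t ∈ Set.Icc a b, ‖g t‖

/-- Application of a continuous linear boundary operator
`B : C([a,b]; E) → F` to a function `y : ℝ → E` that is continuous on `[a,b]`
(junk value `0` otherwise). -/
noncomputable def applyBC {E F : Type*} [NormedAddCommGroup E] [NormedSpace ℂ E]
    [NormedAddCommGroup F] [NormedSpace ℂ F] (a b : ℝ)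
    (B : C(Set.Icc a b, E) →L[ℂ] F) (y : ℝ → E) : F :=
  letI := Classical.propDecidable (ContinuousOn y (Set.Icc a b))
  if hy : ContinuousOn y (Set.Icc a b) then B ⟨(Set.Icc a b).restrict y, hy.restrict⟩ else 0

/-- `y` is a solution of the system `y' + A y = f` on `[a, b]`: it is (absolutely)
continuous on `[a,b]` and satisfies the equivalent integral equation, i.e. the
differential equation holds almost everywhere. -/
def IsSolution (a b : ℝ) {m : ℕ} (A : ℝ → Matrix (Fin m) (Fin m) ℂ)
    (f : ℝ → (Fin m → ℂ)) (y : ℝ → (Fin m → ℂ)) : Prop :=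
  ContinuousOn y (Set.Icc a b) ∧
  IntegrableOn (fun s => f s - (A s).mulVec (y s)) (Set.Icc a b) ∧
  ∀ t ∈ Set.Icc a b, y t = y a + ∫ s in a..t, (f s - (A s).mulVec (y s))

/-- The class `𝓜(a,b;ι)` of sequences of integrable matrix functions `R n` such that the
solution `Z n` of the Cauchy problem `Z' + R Z = 0`, `Z(a) = I` tends to the identity
matrix uniformly on `[a, b]`. -/
def MemMClass (a b : ℝ) (ι : Type*) [Fintype ι] [DecidableEq ι]
    (R : ℕ → ℝ → Matrix ι ι ℂ) : Prop :=
  ∃ Z : ℕ → ℝ → Matrix ι ι ℂ,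
    (∀ n, ContinuousOn (Z n) (Set.Icc a b)) ∧
    (∀ n, IntegrableOn (fun s => R n s * Z n s) (Set.Icc a b)) ∧
    (∀ n, ∀ t ∈ Set.Icc a b, Z n t = 1 - ∫ s in a..t, R n s * Z n s) ∧
    Tendsto (fun n => supIcc a b (fun t => Z n t - 1)) atTop (𝓝 0)

open scoped Interval

lemma supIcc_nonneg {E : Type*} [NormedAddCommGroup E] (a b : ℝ) (g : ℝ → E) :
    0 ≤ supIcc a b g :=
  Real.iSup_nonneg fun _ => Real.iSup_nonneg fun _ => norm_nonneg _

lemma supIcc_le {E : Type*} [NormedAddCommGroup E] {a b c : ℝ} {g : ℝ → E} (hc : 0 ≤ c)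
    (h : ∀ t ∈ Set.Icc a b, ‖g t‖ ≤ c) : supIcc a b g ≤ c :=
  Real.iSup_le (fun t => Real.iSup_le (fun ht => h t ht) hc) hc

lemma le_supIcc {E : Type*} [NormedAddCommGroup E] {a b : ℝ} {g : ℝ → E}
    (hg : ContinuousOn g (Set.Icc a b)) {t : ℝ} (ht : t ∈ Set.Icc a b) :
    ‖g t‖ ≤ supIcc a b g := by
  obtain ⟨M, hM⟩ := isCompact_Icc.exists_bound_of_continuousOn hg
  have hb : BddAbove (Set.range fun s => ⨆ _ : s ∈ Set.Icc a b, ‖g s‖) := by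
    refine ⟨max M 0, ?_⟩
    rintro x ⟨s, rfl⟩
    by_cases hs : s ∈ Set.Icc a b
    · simp only [ciSup_pos hs]
      exact le_max_of_le_left (hM s hs)
    · exact Real.iSup_le (fun h => absurd h hs) (le_max_right _ _)
  have h1 : ‖g t‖ = ⨆ _ : t ∈ Set.Icc a b, ‖g t‖ := by rw [ciSup_pos ht]
  rw [h1]
  exact le_ciSup hb t

lemma pow_sub_pow_abs_le {M : ℝ} (hM : 0 ≤ M) :
    ∀ (k : ℕ) (x y : ℝ), |x| ≤ M → |y| ≤ M → |x ^ k - y ^ k| ≤ k * M ^ (k - 1) * |x - y| := by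
  intro k
  induction k with
  | zero => intro x y _ _; simp
  | succ k ih =>
    intro x y hx hy
    have h1 : x ^ (k+1) - y ^ (k+1) = x ^ k * (x - y) + (x ^ k - y ^ k) * y := by ring
    have hxk : |x ^ k| ≤ M ^ k := by
      rw [abs_pow]; exact pow_le_pow_left₀ (abs_nonneg _) hx k
    have hMk : (k : ℝ) * M ^ (k-1) * M ≤ k * M ^ k := by
      cases k with
      | zero => simp
      | succ k =>
        simp only [Nat.add_sub_cancel]
        rw [mul_assoc, ← pow_succ]
    have hih := ih x y hx hy
    calc |x ^ (k+1) - y ^ (k+1)| ≤ |x ^ k * (x - y)| + |(x ^ k - y ^ k) * y| := by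
          rw [h1]; exact abs_add_le _ _
      _ ≤ M ^ k * |x - y| + (k * M ^ (k-1) * |x - y|) * M := by
          rw [abs_mul, abs_mul]
          have h2 : |x ^ k| * |x - y| ≤ M ^ k * |x - y| :=
            mul_le_mul_of_nonneg_right hxk (abs_nonneg _)
          have h3 : |x ^ k - y ^ k| * |y| ≤ (k * M ^ (k-1) * |x - y|) * M :=
            mul_le_mul hih hy (abs_nonneg _) (by positivity)
          linarith
      _ ≤ M ^ k * |x - y| + (k * M ^ k) * |x - y| := by
          nlinarith [abs_nonneg (x - y), mul_le_mul_of_nonneg_right hMk (abs_nonneg (x-y))]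
      _ = (((k:ℕ)+1 : ℕ) : ℝ) * M ^ (((k:ℕ)+1) - 1) * |x - y| := by
          have : ((k:ℕ)+1) - 1 = k := rfl
          rw [this]
          push_cast
          ring

open intervalIntegral in
lemma keyA_cont (f : ℝ → ℝ) (hc : Continuous f) (hi : Integrable f) (a t : ℝ) (k : ℕ) :
    ∫ s in a..t, f s * (∫ u in a..s, f u) ^ k
      = (∫ s in a..t, f s) ^ (k + 1) / (k + 1) := by
  set ν : ℝ → ℝ := fun s => ∫ u in a..s, f u with hν
  have hνc : Continuous ν := hi.continuous_primitive a
  have hder : ∀ s, HasDerivAt (fun u => ν u ^ (k+1) / ((k:ℝ)+1)) (f s * ν s ^ k) s := by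
    intro s
    have h1 : HasDerivAt ν (f s) s :=
      integral_hasDerivAt_right hi.intervalIntegrable
        (hc.stronglyMeasurableAtFilter _ _) hc.continuousAt
    have h2 := (h1.pow (k+1)).div_const ((k:ℝ)+1)
    refine h2.congr_deriv ?_
    have : ((k:ℝ)+1) ≠ 0 := by positivity
    rw [Nat.add_sub_cancel, div_eq_iff this]
    push_cast
    ring
  have hint : IntervalIntegrable (fun s => f s * ν s ^ k) MeasureTheory.volume a t :=
    (hc.mul (hνc.pow k)).intervalIntegrable a t
  have h := integral_eq_sub_of_hasDerivAt (fun s _ => hder s) hint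
  rw [h]
  have hνa : ν a = 0 := integral_same
  rw [hνa]
  simp [zero_pow (Nat.succ_ne_zero k)]
  rfl

lemma nat_mul_pow_pred {M : ℝ} (hM : 0 ≤ M) (k : ℕ) :
    (k:ℝ) * M ^ (k-1) * M ≤ (k:ℝ) * M ^ k := by
  cases k with
  | zero => simp
  | succ k =>
    simp only [Nat.add_sub_cancel]
    rw [mul_assoc, ← pow_succ]

lemma keyA (f : ℝ → ℝ) (hi : Integrable f) (a t : ℝ) (k : ℕ) :
    ∫ s in a..t, f s * (∫ u in a..s, f u) ^ k
      = (∫ s in a..t, f s) ^ (k + 1) / (k + 1) := by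
  set μ : ℝ → ℝ := fun s => ∫ u in a..s, f u with hμdef
  have hμc : Continuous μ := hi.continuous_primitive a
  set B : ℝ := ∫ x, |f x| with hBdef
  have hB0 : 0 ≤ B := integral_nonneg fun x => abs_nonneg _
  set M : ℝ := B + 1 with hMdef
  have hM0 : (0:ℝ) ≤ M := by linarith
  have hμb : ∀ s, |μ s| ≤ B := by
    intro s
    calc |μ s| ≤ ∫ u in Ι a s, |f u| := by
          simpa using intervalIntegral.norm_integral_le_integral_norm_uIoc (f := f) (a := a) (b := s)
      _ ≤ B := by
          apply setIntegral_le_integral hi.abs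
          exact Filter.Eventually.of_forall fun x => abs_nonneg _
  have hμM : ∀ s, |μ s| ≤ M := fun s => (hμb s).trans (by linarith)
  have hμpow : ∀ s, |μ s ^ k| ≤ M ^ k := by
    intro s; rw [abs_pow]; exact pow_le_pow_left₀ (abs_nonneg _) (hμM s) k
  have hfμint : Integrable (fun s => f s * μ s ^ k) := by
    refine Integrable.mono' (hi.abs.mul_const (M ^ k))
      (hi.aestronglyMeasurable.mul ((hμc.pow k).aestronglyMeasurable)) ?_
    refine Filter.Eventually.of_forall fun s => ?_
    rw [norm_mul, Real.norm_eq_abs, Real.norm_eq_abs]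
    exact mul_le_mul_of_nonneg_left (hμpow s) (abs_nonneg _)
  have main : ∀ ε : ℝ, 0 < ε →
      |(∫ s in a..t, f s * μ s ^ k) - μ t ^ (k+1) / ((k:ℝ)+1)| ≤ ε := by
    intro ε hε
    set D : ℝ := ((k:ℝ) + 2) * M ^ k with hDdef
    have hD0 : 0 ≤ D := by positivity
    set δ : ℝ := min 1 (ε / (D + 1)) with hδdef
    have hδ0 : 0 < δ := lt_min one_pos (by positivity)
    have hδ1 : δ ≤ 1 := min_le_left _ _
    have hδε : δ * D ≤ ε := by
      have h1 : δ ≤ ε / (D + 1) := min_le_right _ _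
      calc δ * D ≤ (ε / (D+1)) * D := mul_le_mul_of_nonneg_right h1 hD0
        _ ≤ (ε / (D+1)) * (D+1) := by
            apply mul_le_mul_of_nonneg_left (by linarith)
            positivity
        _ = ε := by field_simp
    obtain ⟨g, gsupp, hfg, gc, gi⟩ := hi.exists_hasCompactSupport_integral_sub_le hδ0
    set ν : ℝ → ℝ := fun s => ∫ u in a..s, g u with hνdef
    have hνc : Continuous ν := gi.continuous_primitive a
    have hfgi : Integrable (fun x => f x - g x) := hi.sub gi
    have hfgabs : Integrable (fun x => |f x - g x|) := hfgi.abs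
    have hfgint : ∫ x, |f x - g x| ≤ δ := by
      calc (∫ x, |f x - g x|) = ∫ x, ‖f x - g x‖ := by
            congr 1
        _ ≤ δ := hfg
    have hfgnn : 0 ≤ ∫ x, |f x - g x| := integral_nonneg fun x => abs_nonneg _
    have hd : ∀ s, |ν s - μ s| ≤ δ := by
      intro s
      have h1 : ν s - μ s = ∫ u in a..s, (g u - f u) :=
        (intervalIntegral.integral_sub gi.intervalIntegrable hi.intervalIntegrable).symm
      rw [h1]
      calc |∫ u in a..s, (g u - f u)| ≤ ∫ u in Ι a s, |g u - f u| := by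
            simpa using intervalIntegral.norm_integral_le_integral_norm_uIoc
              (f := fun u => g u - f u) (a := a) (b := s)
        _ ≤ ∫ u, |g u - f u| := by
            apply setIntegral_le_integral (gi.sub hi).abs
            exact Filter.Eventually.of_forall fun x => abs_nonneg _
        _ = ∫ u, |f u - g u| := by
            congr 1; funext u; rw [abs_sub_comm]
        _ ≤ δ := hfgint
    have hνb : ∀ s, |ν s| ≤ M := by
      intro s
      have h1 : ν s = μ s + (ν s - μ s) := by ring
      calc |ν s| = |μ s + (ν s - μ s)| := by rw [← h1]
        _ ≤ |μ s| + |ν s - μ s| := abs_add_le _ _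
        _ ≤ B + δ := add_le_add (hμb s) (hd s)
        _ ≤ M := by rw [hMdef]; linarith
    have hνpow : ∀ s, |ν s ^ k| ≤ M ^ k := by
      intro s; rw [abs_pow]; exact pow_le_pow_left₀ (abs_nonneg _) (hνb s) k
    have hgint1 : ∫ x, |g x| ≤ M := by
      have h1 : ∀ x, |g x| ≤ |f x| + |f x - g x| := by
        intro x
        have h2 : g x = f x - (f x - g x) := by ring
        calc |g x| = |f x - (f x - g x)| := by rw [← h2]
          _ ≤ |f x| + |f x - g x| := abs_sub _ _
      calc ∫ x, |g x| ≤ ∫ x, (|f x| + |f x - g x|) :=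
            integral_mono gi.abs (hi.abs.add hfgabs) h1
        _ = B + ∫ x, |f x - g x| := by rw [integral_add hi.abs hfgabs]
        _ ≤ B + δ := by linarith
        _ ≤ M := by rw [hMdef]; linarith
    have hgνint : Integrable (fun s => g s * ν s ^ k) := by
      refine Integrable.mono' (gi.abs.mul_const (M ^ k))
        (gi.aestronglyMeasurable.mul ((hνc.pow k).aestronglyMeasurable)) ?_
      refine Filter.Eventually.of_forall fun s => ?_
      rw [norm_mul, Real.norm_eq_abs, Real.norm_eq_abs]
      exact mul_le_mul_of_nonneg_left (hνpow s) (abs_nonneg _)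
    have hkey := keyA_cont g gc gi a t k
    set c2 : ℝ := (k:ℝ) * M ^ (k-1) * δ with hc2def
    have hc20 : 0 ≤ c2 := by positivity
    have hint1 : Integrable (fun s => |f s - g s| * M ^ k) := hfgabs.mul_const _
    have hint2 : Integrable (fun s => |g s| * c2) := gi.abs.mul_const _
    set φ : ℝ → ℝ := fun s => |f s - g s| * M ^ k + |g s| * c2 with hφdef
    have hφint : Integrable φ := hint1.add hint2
    have hpt : ∀ s, |f s * μ s ^ k - g s * ν s ^ k| ≤ φ s := by
      intro s
      have h1 : f s * μ s ^ k - g s * ν s ^ k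
          = (f s - g s) * μ s ^ k + g s * (μ s ^ k - ν s ^ k) := by ring
      have h2 : |μ s ^ k - ν s ^ k| ≤ c2 := by
        calc |μ s ^ k - ν s ^ k| ≤ (k:ℝ) * M ^ (k-1) * |μ s - ν s| :=
              pow_sub_pow_abs_le hM0 k _ _ (hμM s) (hνb s)
          _ ≤ c2 := by
              rw [hc2def]
              apply mul_le_mul_of_nonneg_left _ (by positivity)
              rw [abs_sub_comm]; exact hd s
      rw [h1]
      calc |(f s - g s) * μ s ^ k + g s * (μ s ^ k - ν s ^ k)|
          ≤ |(f s - g s) * μ s ^ k| + |g s * (μ s ^ k - ν s ^ k)| := abs_add_le _ _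
        _ ≤ |f s - g s| * M ^ k + |g s| * c2 := by
            rw [abs_mul, abs_mul]
            exact add_le_add (mul_le_mul_of_nonneg_left (hμpow s) (abs_nonneg _))
              (mul_le_mul_of_nonneg_left h2 (abs_nonneg _))
        _ = φ s := rfl
    have hterm1 : |(∫ s in a..t, f s * μ s ^ k) - ∫ s in a..t, g s * ν s ^ k|
        ≤ M ^ k * δ + c2 * M := by
      have h1 : (∫ s in a..t, f s * μ s ^ k) - ∫ s in a..t, g s * ν s ^ k
          = ∫ s in a..t, (f s * μ s ^ k - g s * ν s ^ k) :=
        (intervalIntegral.integral_sub hfμint.intervalIntegrable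
          hgνint.intervalIntegrable).symm
      rw [h1]
      have habsint : IntegrableOn (fun s => |f s * μ s ^ k - g s * ν s ^ k|) (Ι a t) :=
        (hfμint.sub hgνint).abs.integrableOn
      calc |∫ s in a..t, (f s * μ s ^ k - g s * ν s ^ k)|
          ≤ ∫ s in Ι a t, |f s * μ s ^ k - g s * ν s ^ k| := by
            simpa using intervalIntegral.norm_integral_le_integral_norm_uIoc
              (f := fun s => f s * μ s ^ k - g s * ν s ^ k) (a := a) (b := t)
        _ ≤ ∫ s in Ι a t, φ s := by
            apply setIntegral_mono_on habsint hφint.integrableOn measurableSet_uIoc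
            exact fun s _ => hpt s
        _ ≤ ∫ s, φ s := by
            apply setIntegral_le_integral hφint
            refine Filter.Eventually.of_forall fun s => ?_
            have h3 := abs_nonneg (f s - g s)
            have h4 := abs_nonneg (g s)
            have h5 := pow_nonneg hM0 k
            rw [hφdef]
            positivity
        _ = (∫ s, |f s - g s|) * M ^ k + (∫ s, |g s|) * c2 := by
            rw [hφdef]
            rw [integral_add hint1 hint2, integral_mul_const, integral_mul_const]
        _ ≤ M ^ k * δ + c2 * M := by
            have h4 : 0 ≤ ∫ s, |g s| := integral_nonneg fun s => abs_nonneg _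
            have h5 := pow_nonneg hM0 k
            nlinarith
    have hterm2 : |ν t ^ (k+1) / ((k:ℝ)+1) - μ t ^ (k+1) / ((k:ℝ)+1)| ≤ M ^ k * δ := by
      rw [div_sub_div_same, abs_div]
      have hk1 : |((k:ℝ)+1)| = (k:ℝ)+1 := abs_of_pos (by positivity)
      rw [hk1, div_le_iff₀ (by positivity : (0:ℝ) < (k:ℝ)+1)]
      calc |ν t ^ (k+1) - μ t ^ (k+1)| ≤ (((k:ℕ)+1 : ℕ) : ℝ) * M ^ (((k:ℕ)+1) - 1) * |ν t - μ t| :=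
            pow_sub_pow_abs_le hM0 (k+1) _ _ (hνb t) (hμM t)
        _ ≤ ((k:ℝ)+1) * M ^ k * δ := by
            have h0 : (((k:ℕ)+1) - 1 : ℕ) = k := rfl
            rw [h0]
            push_cast
            exact mul_le_mul_of_nonneg_left (hd t) (by positivity)
        _ = M ^ k * δ * ((k:ℝ)+1) := by ring
    have heq : (∫ s in a..t, g s * ν s ^ k) = ν t ^ (k+1) / ((k:ℝ)+1) := by
      rw [hkey]
    have hterm2' : |(∫ s in a..t, g s * ν s ^ k) - μ t ^ (k+1) / ((k:ℝ)+1)| ≤ M ^ k * δ := by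
      rw [heq]; exact hterm2
    calc |(∫ s in a..t, f s * μ s ^ k) - μ t ^ (k+1) / ((k:ℝ)+1)|
        ≤ |(∫ s in a..t, f s * μ s ^ k) - ∫ s in a..t, g s * ν s ^ k|
          + |(∫ s in a..t, g s * ν s ^ k) - μ t ^ (k+1) / ((k:ℝ)+1)| := abs_sub_le _ _ _
      _ ≤ (M ^ k * δ + c2 * M) + M ^ k * δ := add_le_add hterm1 hterm2'
      _ ≤ δ * D := by
          have h6 := nat_mul_pow_pred hM0 k
          have h7 := mul_le_mul_of_nonneg_right h6 hδ0.le
          have h8 : c2 * M = ((k:ℝ) * M ^ (k-1) * M) * δ := by rw [hc2def]; ring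
          rw [hDdef, h8]
          nlinarith [pow_nonneg hM0 k, hδ0.le]
      _ ≤ ε := hδε
  have habs : |(∫ s in a..t, f s * μ s ^ k) - μ t ^ (k+1) / ((k:ℝ)+1)| ≤ 0 := by
    by_contra h
    push_neg at h
    have h2 := main (|(∫ s in a..t, f s * μ s ^ k) - μ t ^ (k+1) / ((k:ℝ)+1)| / 2) (by linarith)
    linarith
  have h4 := le_antisymm habs (abs_nonneg _)
  have h5 := abs_eq_zero.mp h4
  have h3 : (∫ s in a..t, f s * μ s ^ k) = μ t ^ (k+1) / ((k:ℝ)+1) := by linarith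
  push_cast
  exact h3

lemma matrix_norm_mul_le {m : ℕ} (X Y : Matrix (Fin m) (Fin m) ℂ) :
    ‖X * Y‖ ≤ (m:ℝ) * ‖X‖ * ‖Y‖ := by
  have h0 : (0:ℝ) ≤ (m:ℝ) * ‖X‖ * ‖Y‖ := by positivity
  rw [Matrix.norm_le_iff h0]
  intro i j
  calc ‖(X*Y) i j‖ = ‖∑ k, X i k * Y k j‖ := by rw [Matrix.mul_apply]
    _ ≤ ∑ k : Fin m, ‖X i k * Y k j‖ := norm_sum_le _ _
    _ ≤ ∑ _k : Fin m, ‖X‖ * ‖Y‖ := by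
        refine Finset.sum_le_sum fun k _ => ?_
        rw [norm_mul]
        exact mul_le_mul (Matrix.norm_entry_le_entrywise_sup_norm X)
          (Matrix.norm_entry_le_entrywise_sup_norm Y) (norm_nonneg _) (norm_nonneg _)
    _ = (m:ℝ) * ‖X‖ * ‖Y‖ := by simp [Finset.sum_const, mul_assoc]

lemma integrable_mul_primitive_pow (f : ℝ → ℝ) (hi : Integrable f) (a : ℝ) (k : ℕ) :
    Integrable (fun s => f s * (∫ u in a..s, f u) ^ k) := by
  set μ : ℝ → ℝ := fun s => ∫ u in a..s, f u with hμdef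
  have hμc : Continuous μ := hi.continuous_primitive a
  set B : ℝ := ∫ x, |f x| with hBdef
  have hμb : ∀ s, |μ s| ≤ B := by
    intro s
    calc |μ s| ≤ ∫ u in Ι a s, |f u| := by
          simpa using intervalIntegral.norm_integral_le_integral_norm_uIoc (f := f) (a := a) (b := s)
      _ ≤ B := by
          apply setIntegral_le_integral hi.abs
          exact Filter.Eventually.of_forall fun x => abs_nonneg _
  have hB0 : 0 ≤ B := (abs_nonneg _).trans (hμb a)
  refine Integrable.mono' (hi.abs.mul_const (B ^ k))
    (hi.aestronglyMeasurable.mul ((hμc.pow k).aestronglyMeasurable)) ?_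
  refine Filter.Eventually.of_forall fun s => ?_
  rw [norm_mul, Real.norm_eq_abs, Real.norm_eq_abs]
  refine mul_le_mul_of_nonneg_left ?_ (abs_nonneg _)
  rw [abs_pow]
  exact pow_le_pow_left₀ (abs_nonneg _) (hμb s) k

noncomputable def picard {m : ℕ} (a : ℝ) (A : ℝ → Matrix (Fin m) (Fin m) ℂ) :
    ℕ → ℝ → Matrix (Fin m) (Fin m) ℂ
  | 0 => fun _ => 1
  | k+1 => fun t => -∫ s in a..t, A s * picard a A k s

lemma picard_zero {m : ℕ} (a : ℝ) (A : ℝ → Matrix (Fin m) (Fin m) ℂ) (t : ℝ) :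
    picard a A 0 t = 1 := rfl

lemma picard_succ {m : ℕ} (a : ℝ) (A : ℝ → Matrix (Fin m) (Fin m) ℂ) (k : ℕ) (t : ℝ) :
    picard a A (k+1) t = -∫ s in a..t, A s * picard a A k s := rfl

lemma mul_integrableOn {m : ℕ} {a b : ℝ} (hab : a ≤ b)
    {A g : ℝ → Matrix (Fin m) (Fin m) ℂ}
    (hA : IntegrableOn A (Set.Icc a b)) (hg : ContinuousOn g (Set.Icc a b)) :
    IntegrableOn (fun s => A s * g s) (Set.Icc a b) := by
  obtain ⟨M, hM⟩ := isCompact_Icc.exists_bound_of_continuousOn hg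
  have hM0 : 0 ≤ M := (norm_nonneg (g a)).trans (hM a (Set.left_mem_Icc.2 hab))
  haveI : TopologicalSpace.PseudoMetrizableSpace (Matrix (Fin m) (Fin m) ℂ) :=
    inferInstanceAs (TopologicalSpace.PseudoMetrizableSpace (Fin m → Fin m → ℂ))
  refine Integrable.mono' ((hA.norm.const_mul ((m:ℝ))).mul_const M)
    (hA.aestronglyMeasurable.mul (hg.aestronglyMeasurable measurableSet_Icc)) ?_
  rw [ae_restrict_iff' measurableSet_Icc]
  refine Filter.Eventually.of_forall fun s hs => ?_
  calc ‖A s * g s‖ ≤ (m:ℝ) * ‖A s‖ * ‖g s‖ := matrix_norm_mul_le _ _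
    _ ≤ (m:ℝ) * ‖A s‖ * M := mul_le_mul_of_nonneg_left (hM s hs) (by positivity)

lemma picard_contOn {m : ℕ} {a b : ℝ} (hab : a ≤ b)
    {A : ℝ → Matrix (Fin m) (Fin m) ℂ} (hA : IntegrableOn A (Set.Icc a b)) :
    ∀ k, ContinuousOn (picard a A k) (Set.Icc a b) := by
  intro k
  induction k with
  | zero => exact continuousOn_const
  | succ k ih =>
    have hint : IntegrableOn (fun s => A s * picard a A k s) (Set.uIcc a b) := by
      rw [Set.uIcc_of_le hab]; exact mul_integrableOn hab hA ih
    have h1 : ContinuousOn (fun t => ∫ s in a..t, A s * picard a A k s) (Set.Icc a b) := by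
      have := intervalIntegral.continuousOn_primitive_interval hint
      rwa [Set.uIcc_of_le hab] at this
    exact h1.neg

lemma picard_intOn {m : ℕ} {a b : ℝ} (hab : a ≤ b)
    {A : ℝ → Matrix (Fin m) (Fin m) ℂ} (hA : IntegrableOn A (Set.Icc a b)) (k : ℕ) :
    IntegrableOn (fun s => A s * picard a A k s) (Set.Icc a b) :=
  mul_integrableOn hab hA (picard_contOn hab hA k)

lemma picard_bound {m : ℕ} {a b : ℝ} (hab : a ≤ b)
    {A : ℝ → Matrix (Fin m) (Fin m) ℂ} (hA : IntegrableOn A (Set.Icc a b)) {ε : ℝ}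
    (hε : ∀ t ∈ Set.Icc a b, ‖∫ s in a..t, A s‖ ≤ ε) :
    ∀ k, ∀ t ∈ Set.Icc a b, ‖picard a A (k+1) t‖
      ≤ ε * ((m:ℝ) * ∫ u in a..t, (Set.Icc a b).indicator (fun s => ‖A s‖) u) ^ k
        / (Nat.factorial k) := by
  have hFi : Integrable ((Set.Icc a b).indicator (fun s => ‖A s‖)) :=
    IntegrableOn.integrable_indicator hA.norm measurableSet_Icc
  set F : ℝ → ℝ := (Set.Icc a b).indicator (fun s => ‖A s‖) with hFdef
  have hFnn : ∀ u, 0 ≤ F u := fun u => Set.indicator_nonneg (fun x _ => norm_nonneg _) u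
  set μ : ℝ → ℝ := fun s => ∫ u in a..s, F u with hμdef
  have hμnn : ∀ s, a ≤ s → 0 ≤ μ s := by
    intro s hs
    rw [hμdef]
    simp only []
    rw [intervalIntegral.integral_of_le hs]
    exact setIntegral_nonneg measurableSet_Ioc fun u _ => hFnn u
  intro k
  induction k with
  | zero =>
    intro t ht
    have h1 : picard a A 1 t = -∫ s in a..t, A s := by
      rw [picard_succ]
      congr 1
      apply intervalIntegral.integral_congr
      intro s _
      simp [picard_zero]
    rw [h1, norm_neg]
    simpa using hε t ht
  | succ k ih =>
    intro t ht
    have hat : a ≤ t := ht.1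
    have hIoc : Set.Ioc a t ⊆ Set.Icc a b :=
      fun s hs => ⟨hs.1.le, hs.2.trans ht.2⟩
    have hε0 : 0 ≤ ε := (norm_nonneg _).trans (hε a (Set.left_mem_Icc.2 hab))
    have hfact : (0:ℝ) < (Nat.factorial k : ℝ) := by
      exact_mod_cast Nat.factorial_pos k
    set c : ℝ := ε * (m:ℝ)^(k+1) / (Nat.factorial k) with hcdef
    have hc0 : 0 ≤ c := by positivity
    have hFμint : Integrable (fun s => F s * μ s ^ k) := integrable_mul_primitive_pow F hFi a k
    calc ‖picard a A (k+2) t‖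
        = ‖∫ s in a..t, A s * picard a A (k+1) s‖ := by rw [picard_succ, norm_neg]
      _ ≤ ∫ s in Set.Ioc a t, ‖A s * picard a A (k+1) s‖ := by
          rw [intervalIntegral.integral_of_le hat]
          exact norm_integral_le_integral_norm _
      _ ≤ ∫ s in Set.Ioc a t, c * (F s * μ s ^ k) := by
          apply setIntegral_mono_on
            (((picard_intOn hab hA (k+1)).mono_set hIoc).norm)
            ((hFμint.const_mul c).integrableOn)
            measurableSet_Ioc
          intro s hs
          have hsmem : s ∈ Set.Icc a b := hIoc hs
          have hihs := ih s hsmem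
          have hμs0 : 0 ≤ μ s := hμnn s hs.1.le
          calc ‖A s * picard a A (k+1) s‖
              ≤ (m:ℝ) * ‖A s‖ * ‖picard a A (k+1) s‖ := matrix_norm_mul_le _ _
            _ ≤ (m:ℝ) * ‖A s‖ * (ε * ((m:ℝ) * μ s) ^ k / (Nat.factorial k)) := by
                refine mul_le_mul_of_nonneg_left hihs (by positivity)
            _ = c * (F s * μ s ^ k) := by
                rw [hFdef, Set.indicator_of_mem hsmem, hcdef]
                rw [mul_pow]
                field_simp
                ring
      _ = c * ∫ s in Set.Ioc a t, F s * μ s ^ k := MeasureTheory.integral_const_mul c _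
      _ = c * (μ t ^ (k+1) / ((k:ℝ)+1)) := by
          congr 1
          rw [← intervalIntegral.integral_of_le hat]
          have := keyA F hFi a t k
          rw [this]
      _ = ε * ((m:ℝ) * μ t) ^ (k+1) / (Nat.factorial (k+1)) := by
          rw [hcdef, Nat.factorial_succ, mul_pow]
          have h2 : ((Nat.factorial k : ℝ)) ≠ 0 := ne_of_gt hfact
          push_cast
          field_simp

/-- If `‖R^∨_{Aₙ}‖_∞ → 0` and `‖R_{Aₙ}‖₁ = O(1)`, then the sequence `R_{Aₙ}` belongs to
the class `𝓜ᵐ`. -/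
theorem statement5 (m : ℕ) (a b : ℝ) (hab : a < b)
    (R : ℕ → ℝ → Matrix (Fin m) (Fin m) ℂ)
    (hR : ∀ n, IntegrableOn (R n) (Set.Icc a b))
    -- ‖R^∨_{Aₙ}‖_∞ → 0
    (hI : Tendsto (fun n => supIcc a b (fun t => ∫ s in a..t, R n s)) atTop (𝓝 0))
    -- ‖R_{Aₙ}‖₁ = O(1)
    (hII : ∃ C : ℝ, ∀ n, (∫ t in Set.Icc a b, ‖R n t‖) ≤ C) :
    MemMClass a b (Fin m) R := by
  classical
  haveI : TopologicalSpace.PseudoMetrizableSpace (Matrix (Fin m) (Fin m) ℂ) :=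
    inferInstanceAs (TopologicalSpace.PseudoMetrizableSpace (Fin m → Fin m → ℂ))
  letI : ENormedAddMonoid (Matrix (Fin m) (Fin m) ℂ) := NormedAddGroup.toENormedAddMonoid
  obtain ⟨C, hC⟩ := hII
  have hab' : a ≤ b := hab.le
  have hC0 : 0 ≤ C := le_trans (integral_nonneg fun t => norm_nonneg _) (hC 0)
  set K : ℝ := (m:ℝ) with hKdef
  have hK0 : 0 ≤ K := Nat.cast_nonneg m
  set ε : ℕ → ℝ := fun n => supIcc a b (fun t => ∫ s in a..t, R n s) with hεdef
  have hε0 : ∀ n, 0 ≤ ε n := fun n => supIcc_nonneg _ _ _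
  have hVcont : ∀ n, ContinuousOn (fun t => ∫ s in a..t, R n s) (Set.Icc a b) := by
    intro n
    have h := intervalIntegral.continuousOn_primitive_interval
      (μ := volume) (f := R n) (a := a) (b := b) (by rw [Set.uIcc_of_le hab']; exact hR n)
    rwa [Set.uIcc_of_le hab'] at h
  have hεb : ∀ n, ∀ t ∈ Set.Icc a b, ‖∫ s in a..t, R n s‖ ≤ ε n :=
    fun n t ht => le_supIcc (hVcont n) ht
  -- the key pointwise bounds
  have hFi : ∀ n, Integrable ((Set.Icc a b).indicator (fun s => ‖R n s‖)) := fun n =>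
    IntegrableOn.integrable_indicator (hR n).norm measurableSet_Icc
  have hμnn : ∀ n, ∀ t ∈ Set.Icc a b,
      0 ≤ ∫ u in a..t, (Set.Icc a b).indicator (fun s => ‖R n s‖) u := by
    intro n t ht
    rw [intervalIntegral.integral_of_le ht.1]
    exact setIntegral_nonneg measurableSet_Ioc
      (fun u _ => Set.indicator_nonneg (fun x _ => norm_nonneg _) u)
  have hμC : ∀ n, ∀ t ∈ Set.Icc a b,
      (∫ u in a..t, (Set.Icc a b).indicator (fun s => ‖R n s‖) u) ≤ C := by
    intro n t ht
    calc (∫ u in a..t, (Set.Icc a b).indicator (fun s => ‖R n s‖) u)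
        = ∫ u in Set.Ioc a t, (Set.Icc a b).indicator (fun s => ‖R n s‖) u :=
          intervalIntegral.integral_of_le ht.1
      _ ≤ ∫ u, (Set.Icc a b).indicator (fun s => ‖R n s‖) u := by
          apply setIntegral_le_integral (hFi n)
          exact Filter.Eventually.of_forall
            (fun u => Set.indicator_nonneg (fun x _ => norm_nonneg _) u)
      _ = ∫ u in Set.Icc a b, ‖R n u‖ := integral_indicator measurableSet_Icc
      _ ≤ C := hC n
  have hPb : ∀ n k, ∀ t ∈ Set.Icc a b,
      ‖picard a (R n) (k+1) t‖ ≤ ε n * (K*C)^k / (Nat.factorial k) := by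
    intro n k t ht
    calc ‖picard a (R n) (k+1) t‖
        ≤ ε n * ((m:ℝ) * ∫ u in a..t, (Set.Icc a b).indicator (fun s => ‖R n s‖) u) ^ k
          / (Nat.factorial k) := picard_bound hab' (hR n) (hεb n) k t ht
      _ ≤ ε n * (K*C)^k / (Nat.factorial k) := by
          have hfact : (0:ℝ) < (Nat.factorial k : ℝ) := by exact_mod_cast Nat.factorial_pos k
          have hμ := hμC n t ht
          have hμ0 := hμnn n t ht
          have h1 : ((m:ℝ) * ∫ u in a..t, (Set.Icc a b).indicator (fun s => ‖R n s‖) u) ^ k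
              ≤ (K*C)^k :=
            pow_le_pow_left₀ (by positivity) (mul_le_mul_of_nonneg_left hμ hK0) k
          have h2 : ε n * ((m:ℝ) * ∫ u in a..t,
                (Set.Icc a b).indicator (fun s => ‖R n s‖) u) ^ k ≤ ε n * (K*C)^k :=
            mul_le_mul_of_nonneg_left h1 (hε0 n)
          have h3 := mul_le_mul_of_nonneg_right h2 (inv_nonneg.2 hfact.le)
          simpa [div_eq_mul_inv] using h3
  -- the majorant sequence
  set u : ℕ → ℕ → ℝ := fun n k =>
    match k with
    | 0 => ‖(1 : Matrix (Fin m) (Fin m) ℂ)‖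
    | (k+1) => ε n * (K*C)^k / (Nat.factorial k) with hudef
  have hu0 : ∀ n, u n 0 = ‖(1 : Matrix (Fin m) (Fin m) ℂ)‖ := fun n => rfl
  have husucc : ∀ n k, u n (k+1) = ε n * (K*C)^k / (Nat.factorial k) := fun n k => rfl
  have hunn : ∀ n k, 0 ≤ u n k := by
    intro n k
    cases k with
    | zero => rw [hu0 n]; exact norm_nonneg _
    | succ k =>
      rw [husucc]
      have := hε0 n
      positivity
  have hub : ∀ n k, ∀ t ∈ Set.Icc a b, ‖picard a (R n) k t‖ ≤ u n k := by
    intro n k t ht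
    cases k with
    | zero => rw [picard_zero, hu0 n]
    | succ k => rw [husucc]; exact hPb n k t ht
  have hexp : ∀ x : ℝ, Summable (fun k : ℕ => x ^ k / (Nat.factorial k)) :=
    fun x => Real.summable_pow_div_factorial x
  have husum : ∀ n, Summable (u n) := by
    intro n
    rw [← summable_nat_add_iff 1]
    have h1 : Summable (fun k : ℕ => ε n * ((K*C) ^ k / (Nat.factorial k))) :=
      (hexp (K*C)).mul_left (ε n)
    apply h1.congr
    intro k
    rw [husucc, mul_div_assoc]
  -- definition of Z
  set Z : ℕ → ℝ → Matrix (Fin m) (Fin m) ℂ :=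
    fun n t => ∑' k, picard a (R n) k t with hZdef
  have hsummable : ∀ n, ∀ t ∈ Set.Icc a b, Summable (fun k => picard a (R n) k t) :=
    fun n t ht => Summable.of_norm_bounded (husum n) (fun k => hub n k t ht)
  -- continuity of Z
  have hZcont : ∀ n, ContinuousOn (Z n) (Set.Icc a b) := by
    intro n
    have hTU := tendstoUniformlyOn_tsum_nat (husum n)
      (f := fun k t => picard a (R n) k t) (s := Set.Icc a b) (fun k t ht => hub n k t ht)
    apply hTU.continuousOn
    refine Filter.Frequently.of_forall fun N => ?_
    apply continuousOn_finset_sum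
    intro k _
    exact picard_contOn hab' (hR n) k
  -- integrability of R * Z
  have hZint : ∀ n, IntegrableOn (fun s => R n s * Z n s) (Set.Icc a b) :=
    fun n => mul_integrableOn hab' (hR n) (hZcont n)
  -- the integral equation
  have hZeq : ∀ n, ∀ t ∈ Set.Icc a b, Z n t = 1 - ∫ s in a..t, R n s * Z n s := by
    intro n t ht
    have hat : a ≤ t := ht.1
    have hIocsub : Set.Ioc a t ⊆ Set.Icc a b := fun s hs => ⟨hs.1.le, hs.2.trans ht.2⟩
    have hPIint : ∀ k, IntervalIntegrable (fun s => R n s * picard a (R n) k s) volume a t := by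
      intro k
      have h1 : IntegrableOn (fun s => R n s * picard a (R n) k s) (Set.uIcc a t) := by
        rw [Set.uIcc_of_le hat]
        exact (picard_intOn hab' (hR n) k).mono_set (Set.Icc_subset_Icc le_rfl ht.2)
      exact h1.intervalIntegrable
    -- partial sums satisfy the recursion
    have hS : ∀ N : ℕ, (∑ k ∈ Finset.range (N+1), picard a (R n) k t)
        = 1 - ∫ s in a..t, R n s * (∑ k ∈ Finset.range N, picard a (R n) k s) := by
      intro N
      rw [Finset.sum_range_succ']
      have h1 : ∀ k, picard a (R n) (k+1) t
          = -∫ s in a..t, R n s * picard a (R n) k s := fun k => picard_succ a (R n) k t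
      calc (∑ k ∈ Finset.range N, picard a (R n) (k+1) t) + picard a (R n) 0 t
          = (∑ k ∈ Finset.range N, -∫ s in a..t, R n s * picard a (R n) k s) + 1 := by
            simp only [picard_succ, picard_zero]
        _ = 1 - ∑ k ∈ Finset.range N, ∫ s in a..t, R n s * picard a (R n) k s := by
            rw [Finset.sum_neg_distrib]
            abel
        _ = 1 - ∫ s in a..t, ∑ k ∈ Finset.range N, R n s * picard a (R n) k s := by
            rw [intervalIntegral.integral_finset_sum]
            exact fun k _ => hPIint k
        _ = 1 - ∫ s in a..t, R n s * (∑ k ∈ Finset.range N, picard a (R n) k s) := by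
            congr 1
            apply intervalIntegral.integral_congr
            intro s _
            simp only [Finset.mul_sum]
    -- limit of the left-hand side
    have hlhs : Tendsto (fun N => ∑ k ∈ Finset.range (N+1), picard a (R n) k t)
        atTop (𝓝 (Z n t)) := by
      have h1 := (hsummable n t ht).hasSum.tendsto_sum_nat
      exact h1.comp (tendsto_add_atTop_nat 1)
    -- limit of the right-hand side via dominated convergence
    have hrhs : Tendsto (fun N => ∫ s in a..t, R n s * (∑ k ∈ Finset.range N, picard a (R n) k s))
        atTop (𝓝 (∫ s in a..t, R n s * Z n s)) := by
      have hUnn : (0:ℝ) ≤ ∑' k, u n k := tsum_nonneg (hunn n)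
      have hSb : ∀ N, ∀ s ∈ Set.Icc a b,
          ‖∑ k ∈ Finset.range N, picard a (R n) k s‖ ≤ ∑' k, u n k := by
        intro N s hs
        calc ‖∑ k ∈ Finset.range N, picard a (R n) k s‖
            ≤ ∑ k ∈ Finset.range N, ‖picard a (R n) k s‖ := norm_sum_le _ _
          _ ≤ ∑ k ∈ Finset.range N, u n k :=
              Finset.sum_le_sum fun k _ => hub n k s hs
          _ ≤ ∑' k, u n k := Summable.sum_le_tsum _ (fun k _ => hunn n k) (husum n)
      have heqi : ∀ (g : ℝ → Matrix (Fin m) (Fin m) ℂ),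
          (∫ s in a..t, g s) = ∫ s in Set.Ioc a t, g s :=
        fun g => intervalIntegral.integral_of_le hat
      rw [heqi]
      have h2 : Tendsto
          (fun N => ∫ s in Set.Ioc a t, R n s * (∑ k ∈ Finset.range N, picard a (R n) k s))
          atTop (𝓝 (∫ s in Set.Ioc a t, R n s * Z n s)) := by
        apply MeasureTheory.tendsto_integral_filter_of_dominated_convergence
          (fun s => K * ‖R n s‖ * (∑' k, u n k))
        · filter_upwards with N
          have hAm : AEStronglyMeasurable (R n) (volume.restrict (Set.Ioc a t)) :=
            ((hR n).mono_set hIocsub).aestronglyMeasurable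
          have hSm : AEStronglyMeasurable (fun s => ∑ k ∈ Finset.range N, picard a (R n) k s)
              (volume.restrict (Set.Ioc a t)) := by
            have hc : ContinuousOn (fun s => ∑ k ∈ Finset.range N, picard a (R n) k s)
                (Set.Ioc a t) := by
              apply ContinuousOn.mono _ hIocsub
              apply continuousOn_finset_sum
              intro k _
              exact picard_contOn hab' (hR n) k
            exact hc.aestronglyMeasurable measurableSet_Ioc
          exact hAm.mul hSm
        · filter_upwards with N
          rw [ae_restrict_iff' measurableSet_Ioc]
          filter_upwards with s hs
          have hs' : s ∈ Set.Icc a b := hIocsub hs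
          calc ‖R n s * (∑ k ∈ Finset.range N, picard a (R n) k s)‖
              ≤ (m:ℝ) * ‖R n s‖ * ‖∑ k ∈ Finset.range N, picard a (R n) k s‖ :=
                matrix_norm_mul_le _ _
            _ ≤ K * ‖R n s‖ * (∑' k, u n k) :=
                mul_le_mul_of_nonneg_left (hSb N s hs') (by positivity)
        · exact MeasureTheory.IntegrableOn.mono_set
            (((hR n).norm.const_mul K).mul_const (∑' k, u n k)) hIocsub
        · rw [ae_restrict_iff' measurableSet_Ioc]
          filter_upwards with s hs
          have hs' : s ∈ Set.Icc a b := hIocsub hs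
          have h3 := (hsummable n s hs').hasSum.tendsto_sum_nat
          haveI : @ContinuousMul (Matrix (Fin m) (Fin m) ℂ)
              PseudoMetricSpace.toUniformSpace.toTopologicalSpace _ :=
            inferInstanceAs (ContinuousMul (Matrix (Fin m) (Fin m) ℂ))
          exact (continuous_const.mul continuous_id).continuousAt.tendsto.comp h3
      convert h2 using 2 with N
      exact heqi _
    have hrhs2 : Tendsto (fun N => 1 - ∫ s in a..t,
        R n s * (∑ k ∈ Finset.range N, picard a (R n) k s))
        atTop (𝓝 (1 - ∫ s in a..t, R n s * Z n s)) :=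
      tendsto_const_nhds.sub hrhs
    have hrhs3 : Tendsto (fun N => ∑ k ∈ Finset.range (N+1), picard a (R n) k t)
        atTop (𝓝 (1 - ∫ s in a..t, R n s * Z n s)) := by
      apply hrhs2.congr
      intro N
      exact (hS N).symm
    exact tendsto_nhds_unique hlhs hrhs3
  -- the uniform bound and convergence
  set D : ℝ := ∑' k : ℕ, (K*C)^k / (Nat.factorial k) with hDdef
  have hD0 : 0 ≤ D := tsum_nonneg fun k => by positivity
  have hbound : ∀ n, supIcc a b (fun t => Z n t - 1) ≤ ε n * D := by
    intro n
    apply supIcc_le (mul_nonneg (hε0 n) hD0)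
    intro t ht
    have h0 := hsummable n t ht
    have h1 : HasSum (fun k => picard a (R n) (k+1) t) (Z n t - 1) := by
      have h2 := (hasSum_nat_add_iff' 1).2 h0.hasSum
      simpa [picard_zero] using h2
    rw [← h1.tsum_eq]
    have h4 : HasSum (fun k : ℕ => ε n * ((K*C)^k / (Nat.factorial k))) (ε n * D) :=
      (hexp (K*C)).hasSum.mul_left (ε n)
    apply tsum_of_norm_bounded h4
    intro k
    have := hPb n k t ht
    rwa [mul_div_assoc] at this
  refine ⟨Z, hZcont, hZint, hZeq, ?_⟩
  apply squeeze_zero (fun n => supIcc_nonneg _ _ _) hbound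
  have h5 := hI.mul_const D
  rw [zero_mul] at h5
  exact h5
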